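/- Let α > −1 be real. Define k_0 = 0, k_n = (n+α+1)/(2n+α+1) for n ≥ 1, and d̃_n = (1 − k_{n−1})·k_n for n ≥ 1, so that {d̃_n} is the complementary chain sequence of the Laguerre chain sequence d_n = n(n+α)/((2n+α−1)(2n+α+1)). Then {d̃_n} is a single parameter positive chain sequence: every parameter sequence {h_n}_{n≥0} of {d̃_n} (i.e., every sequence with 0 ≤ h_0 < 1, 0 < h_n < 1 for n ≥ 1, and d̃_n = (1 − h_{n−1})·h_n for all n ≥ 1) satisfies h_n = k_n for all n ≥ 0. -/

import Mathlib

open Finset in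
lemma aux_prod_ge_sum (x : ℕ → ℝ) (hx : ∀ i, 0 ≤ x i) (n : ℕ) :
    1 + ∑ i ∈ range n, x i ≤ ∏ i ∈ range n, (1 + x i) := by
  induction n with
  | zero => simp
  | succ n ih =>
    rw [Finset.sum_range_succ, Finset.prod_range_succ]
    have h1 : 0 ≤ ∑ i ∈ range n, x i := Finset.sum_nonneg fun i _ => hx i
    nlinarith [hx n, ih]

theorem stmt_17 (α : ℝ) (hα : -1 < α) (k dt : ℕ → ℝ)
    (hk0 : k 0 = 0)
    (hk : ∀ n ≥ 1, k n = ((n : ℝ) + α + 1) / (2 * (n : ℝ) + α + 1))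
    (hdt : ∀ n ≥ 1, dt n = (1 - k (n-1)) * k n) :
    ∀ h : ℕ → ℝ, (0 ≤ h 0 ∧ h 0 < 1) → (∀ n ≥ 1, 0 < h n ∧ h n < 1) →
      (∀ n ≥ 1, dt n = (1 - h (n-1)) * h n) →
      ∀ n : ℕ, h n = k n := by
  -- basic facts about k
  have hD : ∀ n : ℕ, 1 ≤ n → (0:ℝ) < 2 * (n:ℝ) + α + 1 := by
    intro n hn
    have : (1:ℝ) ≤ (n:ℝ) := by exact_mod_cast hn
    linarith
  have hkhalf : ∀ n : ℕ, 1 ≤ n → 1/2 < k n := by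
    intro n hn
    rw [hk n hn]
    rw [lt_div_iff₀ (hD n hn)]
    linarith
  have hklt : ∀ n : ℕ, k n < 1 := by
    intro n
    rcases Nat.eq_zero_or_pos n with h0 | h1
    · rw [h0, hk0]; norm_num
    · rw [hk n h1, div_lt_one (hD n h1)]
      have : (1:ℝ) ≤ (n:ℝ) := by exact_mod_cast h1
      linarith
  have hkpos : ∀ n : ℕ, 1 ≤ n → 0 < k n := fun n hn => lt_trans (by norm_num) (hkhalf n hn)
  have hknn : ∀ n : ℕ, 0 ≤ k n := by
    intro n
    rcases Nat.eq_zero_or_pos n with h0 | h1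
    · rw [h0, hk0]
    · exact le_of_lt (hkpos n h1)
  -- ratio identity rewritten as : k n = (1 - k n) * (1 + (α+1)/n) for n ≥ 1
  have hratio : ∀ n : ℕ, 1 ≤ n → k n = (1 - k n) * (1 + (α+1)/(n:ℝ)) := by
    intro n hn
    have hnr : (0:ℝ) < (n:ℝ) := by exact_mod_cast hn
    have hB := hD n hn
    have hB' : 2 * (n:ℝ) + α + 1 ≠ 0 := hB.ne'
    have hnr' : (n:ℝ) ≠ 0 := hnr.ne'
    rw [hk n hn]
    have hq : ((n:ℝ)+α+1)/(2*(n:ℝ)+α+1) * (2*(n:ℝ)+α+1) = (n:ℝ)+α+1 := div_mul_cancel₀ _ hB'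
    have hd : (α+1)/(n:ℝ) * (n:ℝ) = α+1 := div_mul_cancel₀ _ hnr'
    refine mul_left_cancel₀ hnr' ?_
    linear_combination hq + (((n:ℝ)+α+1)/(2*(n:ℝ)+α+1) - 1) * hd
  intro h ⟨h0nn, h0lt⟩ hpos hrel
  -- rewrite the chain relations with successor indices
  have hdt' : ∀ n : ℕ, dt (n+1) = (1 - k n) * k (n+1) := by
    intro n; have := hdt (n+1) (Nat.le_add_left 1 n); simpa using this
  have hrel' : ∀ n : ℕ, dt (n+1) = (1 - h n) * h (n+1) := by
    intro n; have := hrel (n+1) (Nat.le_add_left 1 n); simpa using this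
  have key : ∀ n : ℕ, (1 - k n) * (h (n+1) - k (n+1)) = (h n - k n) * h (n+1) := by
    intro n
    linear_combination hdt' n - hrel' n
  -- main dichotomy
  rcases eq_or_lt_of_le h0nn with h00 | h0pos
  · -- h 0 = 0 : straightforward induction
    intro n
    induction n with
    | zero => rw [← h00, hk0]
    | succ n ih =>
      have hne : (1 - k n) ≠ 0 := by have := hklt n; intro hc; linarith [sub_eq_zero.mp hc]
      have := key n
      rw [ih] at this
      have : (1 - k n) * (h (n+1) - k (n+1)) = 0 := by rw [this]; ring
      have := (mul_eq_zero.mp this).resolve_left hne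
      linarith [sub_eq_zero.mp this]
  · -- h 0 > 0 : derive a contradiction
    exfalso
    set e : ℕ → ℝ := fun n => h n - k n with he
    have hepos : ∀ n, 0 < e n := by
      intro n
      induction n with
      | zero => simp only [he, hk0]; linarith
      | succ n ih =>
        have hk1 : 1 - k n > 0 := by linarith [hklt n]
        have hh1 : 0 < h (n+1) := (hpos (n+1) (Nat.le_add_left 1 n)).1
        have := key n
        have : (1 - k n) * e (n+1) = e n * h (n+1) := this
        nlinarith
    have hhk : ∀ n : ℕ, 1 ≤ n → k n ≤ h n := by
      intro n hn; have := hepos n; simp only [he] at this; linarith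
    -- growth estimate
    have grow : ∀ n : ℕ, e 0 * k (n+1) * ∏ i ∈ Finset.range n, (1 + (α+1)/((i:ℝ)+1)) ≤ e (n+1) := by
      intro n
      induction n with
      | zero =>
        simp only [Finset.range_zero, Finset.prod_empty, mul_one]
        have h1 := key 0
        rw [hk0] at h1
        simp only [he, hk0, sub_zero] at h1 ⊢
        -- h1 : 1 * (h 1 - k 1) = h 0 * h 1
        have hk1 : k 1 ≤ h 1 := hhk 1 le_rfl
        nlinarith [hepos 1, hepos 0, hkpos 1 le_rfl]
      | succ n ih =>
        have hn1 : 1 ≤ n + 1 := Nat.le_add_left 1 n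
        have hk1 : (0:ℝ) < 1 - k (n+1) := by linarith [hklt (n+1)]
        have hkp : 0 < k (n+1) := hkpos (n+1) hn1
        have hkp2 : 0 < k (n+2) := hkpos (n+2) (by omega)
        have hh2 : k (n+2) ≤ h (n+2) := hhk (n+2) (by omega)
        have hkey : (1 - k (n+1)) * e (n+2) = e (n+1) * h (n+2) := key (n+1)
        -- (1 - k (n+1)) * e (n+2) = e (n+1) * h (n+2) ≥ e (n+1) * k (n+2)
        have step : e (n+1) * k (n+2) ≤ (1 - k (n+1)) * e (n+2) := by
          rw [hkey]
          exact mul_le_mul_of_nonneg_left hh2 (hepos (n+1)).le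
        have hprodnn : 0 ≤ ∏ i ∈ Finset.range n, (1 + (α+1)/((i:ℝ)+1)) := by
          apply Finset.prod_nonneg
          intro i _
          have hi : (0:ℝ) < (α+1)/((i:ℝ)+1) := div_pos (by linarith) (by positivity)
          linarith
        have he0 : 0 < e 0 := hepos 0
        have c1 : e 0 * k (n+1) * (∏ i ∈ Finset.range n, (1 + (α+1)/((i:ℝ)+1))) * k (n+2)
            ≤ (1 - k (n+1)) * e (n+2) := by
          calc e 0 * k (n+1) * (∏ i ∈ Finset.range n, (1 + (α+1)/((i:ℝ)+1))) * k (n+2)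
              ≤ e (n+1) * k (n+2) := mul_le_mul_of_nonneg_right ih hkp2.le
            _ ≤ (1 - k (n+1)) * e (n+2) := step
        -- k(n+1) = (1-k(n+1)) * (1 + (α+1)/(n+1))
        have c2 : k (n+1) = (1 - k (n+1)) * (1 + (α+1)/((n:ℝ)+1)) := by
          have := hratio (n+1) hn1
          push_cast at this
          exact this
        show e 0 * k (n+2) * ∏ i ∈ Finset.range (n+1), (1 + (α+1)/((i:ℝ)+1)) ≤ e (n+2)
        rw [Finset.prod_range_succ]
        apply le_of_mul_le_mul_left _ hk1
        have c3 : (1 - k (n+1)) * (e 0 * k (n+2) *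
            ((∏ i ∈ Finset.range n, (1 + (α+1)/((i:ℝ)+1))) * (1 + (α+1)/((n:ℝ)+1))))
            = e 0 * k (n+1) * (∏ i ∈ Finset.range n, (1 + (α+1)/((i:ℝ)+1))) * k (n+2) := by
          linear_combination -(e 0 * k (n+2) * ∏ i ∈ Finset.range n, (1 + (α+1)/((i:ℝ)+1))) * c2
        rw [c3]
        exact c1
    -- e (n+1) < 1
    have elt : ∀ n : ℕ, e (n+1) < 1 := by
      intro n
      have := (hpos (n+1) (Nat.le_add_left 1 n)).2
      have := hkpos (n+1) (Nat.le_add_left 1 n)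
      simp only [he]; linarith
    -- combine with harmonic divergence
    have he0 : 0 < e 0 := hepos 0
    have hα1 : (0:ℝ) < α + 1 := by linarith
    have hsum : ∀ n : ℕ, (α+1) * (∑ i ∈ Finset.range n, (1/((i:ℝ)+1))) * e 0 ≤ 4 := by
      intro n
      have hp := grow n
      have hhalf := hkhalf (n+1) (Nat.le_add_left 1 n)
      have hpr := aux_prod_ge_sum (fun i => (α+1)/((i:ℝ)+1))
        (fun i => le_of_lt (div_pos (by linarith) (by positivity))) n
      have hS : ∑ i ∈ Finset.range n, (α+1)/((i:ℝ)+1)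
          = (α+1) * ∑ i ∈ Finset.range n, (1/((i:ℝ)+1)) := by
        rw [Finset.mul_sum]; congr 1; ext i; ring
      rw [hS] at hpr
      have hSnn : 0 ≤ ∑ i ∈ Finset.range n, (1/((i:ℝ)+1)) :=
        Finset.sum_nonneg fun i _ => by positivity
      have h1 := elt n
      set S := ∑ i ∈ Finset.range n, (1/((i:ℝ)+1)) with hSdef
      have h2 : e 0 * k (n+1) * (1 + (α+1)*S) ≤ e 0 * k (n+1) *
          ∏ i ∈ Finset.range n, (1 + (α+1)/((i:ℝ)+1)) :=
        mul_le_mul_of_nonneg_left hpr (le_of_lt (mul_pos he0 (by linarith)))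
      have h3 : e 0 * k (n+1) * (1 + (α+1)*S) < 1 := lt_of_le_of_lt (h2.trans hp) h1
      nlinarith [h3, mul_nonneg (mul_nonneg (by linarith : (0:ℝ) ≤ k (n+1) - 1/2) he0.le)
        (mul_nonneg hα1.le hSnn), mul_pos he0 (lt_trans (by norm_num) hhalf)]
    obtain ⟨n, hn⟩ := (Real.tendsto_sum_range_one_div_nat_succ_atTop.eventually_ge_atTop
      (4 / ((α+1) * e 0) + 1)).exists
    have h4 := hsum n
    have h5 : (0:ℝ) < (α+1) * e 0 := mul_pos hα1 he0
    have h6 : ((α+1) * e 0) * (4 / ((α+1) * e 0) + 1) = 4 + (α+1) * e 0 := by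
      field_simp
    nlinarith [mul_le_mul_of_nonneg_left hn h5.le, h6, h5, h4]
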